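/- Three-dimensional discrete Sobolev inequality: for every L > 0 there exists a constant C > 0, depending only on L (in particular independent of m and h), such that for every odd positive integer m (with h = L/m) and every periodic grid function φ : (ZMod m)³ → ℝ, ‖φ‖_∞ ≤ C ‖φ‖_{2,2}. -/

import Mathlib

open Finset Real

/-- The periodic 3D grid with `m` points in each direction. -/
abbrev Grid (m : ℕ) := ZMod m × ZMod m × ZMod m

/-- Forward difference in the `x` direction, with mesh size `h`. -/
noncomputable def Dx {m : ℕ} (h : ℝ) (φ : Grid m → ℝ) (p : Grid m) : ℝ :=
  (φ (p.1 + 1, p.2.1, p.2.2) - φ p) / h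

/-- Forward difference in the `y` direction, with mesh size `h`. -/
noncomputable def Dy {m : ℕ} (h : ℝ) (φ : Grid m → ℝ) (p : Grid m) : ℝ :=
  (φ (p.1, p.2.1 + 1, p.2.2) - φ p) / h

/-- Forward difference in the `z` direction, with mesh size `h`. -/
noncomputable def Dz {m : ℕ} (h : ℝ) (φ : Grid m → ℝ) (p : Grid m) : ℝ :=
  (φ (p.1, p.2.1, p.2.2 + 1) - φ p) / h

/-- The standard 7-point discrete Laplacian with mesh size `h`. -/
noncomputable def lapH {m : ℕ} (h : ℝ) (φ : Grid m → ℝ) (p : Grid m) : ℝ :=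
  (φ (p.1 + 1, p.2.1, p.2.2) + φ (p.1 - 1, p.2.1, p.2.2)
    + φ (p.1, p.2.1 + 1, p.2.2) + φ (p.1, p.2.1 - 1, p.2.2)
    + φ (p.1, p.2.1, p.2.2 + 1) + φ (p.1, p.2.1, p.2.2 - 1)
    - 6 * φ p) / h ^ 2

/-- Discrete `L²` inner product `⟨f, g⟩ = h³ Σ f g`. -/
noncomputable def ip {m : ℕ} [NeZero m] (h : ℝ) (f g : Grid m → ℝ) : ℝ :=
  h ^ 3 * ∑ p : Grid m, f p * g p

/-- Square of the discrete `L²` norm. -/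
noncomputable def norm2sq {m : ℕ} [NeZero m] (h : ℝ) (f : Grid m → ℝ) : ℝ :=
  h ^ 3 * ∑ p : Grid m, (f p) ^ 2

/-- The discrete `L²` norm. -/
noncomputable def norm2 {m : ℕ} [NeZero m] (h : ℝ) (f : Grid m → ℝ) : ℝ :=
  Real.sqrt (norm2sq h f)

/-- Fourth power of the discrete `L⁴` norm. -/
noncomputable def norm4p4 {m : ℕ} [NeZero m] (h : ℝ) (f : Grid m → ℝ) : ℝ :=
  h ^ 3 * ∑ p : Grid m, (f p) ^ 4

/-- Square of the discrete gradient norm `‖∇_h f‖₂²`. -/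
noncomputable def gradsq {m : ℕ} [NeZero m] (h : ℝ) (f : Grid m → ℝ) : ℝ :=
  h ^ 3 * ∑ p : Grid m, ((Dx h f p) ^ 2 + (Dy h f p) ^ 2 + (Dz h f p) ^ 2)

/-- Square of the discrete `H²` norm `‖f‖_{2,2}²`. -/
noncomputable def h22sq {m : ℕ} [NeZero m] (h : ℝ) (f : Grid m → ℝ) : ℝ :=
  norm2sq h f + gradsq h f + norm2sq h (lapH h f)

/-- The discrete maximum norm `‖f‖_∞`. -/
noncomputable def normInf {m : ℕ} [NeZero m] (f : Grid m → ℝ) : ℝ :=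
  ⨆ p : Grid m, |f p|

/-- The discrete PFC energy `F_h`. -/
noncomputable def Fh {m : ℕ} [NeZero m] (h ε : ℝ) (φ : Grid m → ℝ) : ℝ :=
  (1 / 4) * norm4p4 h φ + ((1 - ε) / 2) * norm2sq h φ - gradsq h φ
    + (1 / 2) * norm2sq h (lapH h φ)

/-- The discrete chemical potential `μ^{κ+1/2}` of the second-order scheme, built from
`a = φ^{κ-1}`, `b = φ^κ`, `c = φ^{κ+1}`. -/
noncomputable def mu {m : ℕ} (h ε : ℝ) (a b c : Grid m → ℝ) : Grid m → ℝ :=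
  fun p =>
    (1 / 2) * (c p + b p) * ((1 / 2) * ((c p) ^ 2 + (b p) ^ 2))
      + (1 - ε) * ((1 / 2) * (c p + b p))
      + 3 * lapH h b p - lapH h a p
      + lapH h (fun q => (1 / 2) * lapH h (fun r => c r + b r) q) p

/-- One step of the second-order PFC scheme:
`(φ^{κ+1} - φ^κ)/τ = Δ_h μ^{κ+1/2}` with `a = φ^{κ-1}`, `b = φ^κ`, `c = φ^{κ+1}`. -/
def SchemeStep {m : ℕ} (h τ ε : ℝ) (a b c : Grid m → ℝ) : Prop :=
  ∀ p : Grid m, (c p - b p) / τ = lapH h (mu h ε a b c) p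

namespace DSob

variable (m : ℕ)

/-- `ee m n = exp(2π i n / m)`. -/
noncomputable def ee (n : ℤ) : ℂ := Complex.exp ((2 * Real.pi * n / m : ℝ) * Complex.I)

lemma ee_add (a b : ℤ) : ee m (a + b) = ee m a * ee m b := by
  rw [ee, ee, ee, ← Complex.exp_add, ← add_mul]
  congr 2
  push_cast
  ring

lemma ee_zero : ee m 0 = 1 := by simp [ee]

lemma abs_ee (n : ℤ) : ‖ee m n‖ = 1 := Complex.norm_exp_ofReal_mul_I _

lemma ee_ne_zero (n : ℤ) : ee m n ≠ 0 := Complex.exp_ne_zero _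

lemma conj_ee (n : ℤ) : (starRingEnd ℂ) (ee m n) = ee m (-n) := by
  rw [ee, ee, ← Complex.exp_conj]
  congr 1
  simp only [map_mul, Complex.conj_ofReal, Complex.conj_I]
  push_cast
  ring

lemma ee_re (n : ℤ) : (ee m n).re = Real.cos (2 * Real.pi * n / m) :=
  Complex.exp_ofReal_mul_I_re _

variable [NeZero m]

lemma ee_period (a : ℤ) (t : ℤ) : ee m (a + m * t) = ee m a := by
  rw [ee_add]
  have hm : (m : ℂ) ≠ 0 := by exact_mod_cast (NeZero.ne m)
  have : ee m (m * t) = Complex.exp (t * (2 * Real.pi * Complex.I)) := by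
    rw [ee]
    congr 1
    push_cast
    field_simp
  rw [this, Complex.exp_int_mul_two_pi_mul_I, mul_one]

/-- The basic character of `ZMod m`. -/
noncomputable def chi (a : ZMod m) : ℂ := ee m a.val

lemma chi_add (a b : ZMod m) : chi m (a + b) = chi m a * chi m b := by
  rw [chi, chi, chi, ← ee_add]
  have h : a.val + b.val = (a + b).val + m * ((a.val + b.val) / m) := by
    rw [ZMod.val_add]
    exact (Nat.mod_add_div _ _).symm
  have : ((a.val : ℤ) + b.val) = ((a+b).val : ℤ) + m * ((a.val + b.val) / m : ℕ) := by
    exact_mod_cast congrArg (Nat.cast : ℕ → ℤ) h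
  rw [this, ee_period]

lemma chi_zero : chi m 0 = 1 := by
  rw [chi, ZMod.val_zero]
  exact ee_zero m

lemma chi_ne_zero (a : ZMod m) : chi m a ≠ 0 := ee_ne_zero m _

lemma abs_chi (a : ZMod m) : ‖chi m a‖ = 1 := abs_ee m _

lemma conj_chi (a : ZMod m) : (starRingEnd ℂ) (chi m a) = chi m (-a) := by
  have h1 : chi m a * chi m (-a) = 1 := by
    rw [← chi_add, add_neg_cancel, chi_zero]
  have h2 : chi m a * (starRingEnd ℂ) (chi m a) = 1 := by
    rw [Complex.mul_conj]
    norm_cast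
    rw [Complex.normSq_eq_norm_sq, abs_chi]
    norm_num
  exact mul_left_cancel₀ (chi_ne_zero m a) (h2.trans h1.symm)

lemma chi_ne_one {a : ZMod m} (ha : a ≠ 0) : chi m a ≠ 1 := by
  intro h
  rw [chi, ee, Complex.exp_eq_one_iff] at h
  obtain ⟨n, hn⟩ := h
  push_cast at hn
  have hI : (Complex.I : ℂ) ≠ 0 := Complex.I_ne_zero
  have h2 : ((2 * Real.pi * a.val / m : ℂ)) = ((n:ℂ) * (2 * Real.pi)) := by
    refine mul_right_cancel₀ hI ?_
    push_cast
    rw [hn]; ring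
  have hpi : (0:ℝ) < Real.pi := Real.pi_pos
  have hmpos : (0:ℝ) < m := by
    have := Nat.pos_of_ne_zero (NeZero.ne m); exact_mod_cast this
  have h3 : (2 * Real.pi * a.val / m : ℝ) = n * (2 * Real.pi) := by exact_mod_cast h2
  have h2π : (2*Real.pi) ≠ 0 := by positivity
  have h5 : (a.val:ℝ)/m = n := by
    refine mul_left_cancel₀ h2π ?_
    rw [show (2*Real.pi)*((a.val:ℝ)/m) = 2 * Real.pi * a.val / m by ring, h3]; ring
  have h4 : (a.val:ℝ) = n * m := by rw [← h5]; field_simp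
  have hv1 : 0 < a.val := Nat.pos_of_ne_zero (by
    intro hv; exact ha (by rwa [← ZMod.val_eq_zero]))
  have hv2 : a.val < m := ZMod.val_lt a
  have hv1' : (0:ℝ) < (a.val:ℝ) := by exact_mod_cast hv1
  have hv2' : (a.val:ℝ) < (m:ℝ) := by exact_mod_cast hv2
  rcases le_or_gt (1:ℝ) (n:ℝ) with hn1 | hn1
  · nlinarith
  · have : (n:ℝ) ≤ 0 := by
      have : n < 1 := by exact_mod_cast hn1
      have : n ≤ 0 := by omega
      exact_mod_cast this
    nlinarith

lemma osum1 (a : ZMod m) : ∑ x : ZMod m, chi m (a * x) = if a = 0 then (m : ℂ) else 0 := by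
  rcases eq_or_ne a 0 with rfl | ha
  · simp [chi_zero, ZMod.card]
  · rw [if_neg ha]
    have hre : ∑ x : ZMod m, chi m (a * x) = ∑ x : ZMod m, chi m (a * (x + 1)) :=
      (Fintype.sum_equiv (Equiv.addRight (1 : ZMod m)) _ _ (fun x => rfl)).symm
    have hfac : ∀ x : ZMod m, chi m (a * (x + 1)) = chi m (a * x) * chi m a := by
      intro x
      rw [mul_add, mul_one, chi_add]
    rw [Finset.sum_congr rfl (fun x _ => hfac x), ← Finset.sum_mul] at hre
    have := sub_eq_zero.2 hre
    rw [← mul_one_sub] at this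
    rcases mul_eq_zero.1 this with h | h
    · exact h
    · exact absurd (by linear_combination -h : chi m a = 1) (chi_ne_one m ha)

/-- dot product on the grid. -/
def dotg (k p : Grid m) : ZMod m := k.1 * p.1 + k.2.1 * p.2.1 + k.2.2 * p.2.2

lemma osum3 (d : Grid m) :
    ∑ p : Grid m, chi m (dotg m d p) = if d = 0 then ((m : ℂ))^3 else 0 := by
  have expand : ∀ p : Grid m, chi m (dotg m d p)
      = chi m (d.1 * p.1) * (chi m (d.2.1 * p.2.1) * chi m (d.2.2 * p.2.2)) := by
    intro p
    rw [dotg, chi_add, chi_add, mul_assoc]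
  rw [Fintype.sum_prod_type]
  simp_rw [Fintype.sum_prod_type, expand]
  simp_rw [← Finset.mul_sum, ← Finset.sum_mul]
  rw [show (∑ x : ZMod m, chi m (d.1 * x)) = if d.1 = 0 then (m:ℂ) else 0 from osum1 m d.1]
  simp_rw [show (∑ y : ZMod m, chi m (d.2.1 * y)) = if d.2.1 = 0 then (m:ℂ) else 0 from osum1 m d.2.1,
    show (∑ z : ZMod m, chi m (d.2.2 * z)) = if d.2.2 = 0 then (m:ℂ) else 0 from osum1 m d.2.2]
  have hd : d = 0 ↔ d.1 = 0 ∧ d.2.1 = 0 ∧ d.2.2 = 0 := by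
    constructor
    · rintro rfl; exact ⟨rfl, rfl, rfl⟩
    · rintro ⟨h1, h2, h3⟩
      exact Prod.ext h1 (Prod.ext h2 h3)
  split_ifs with h1 h2 h3 h4 h5 h6 h7 <;>
    simp_all [hd] <;> ring

noncomputable def fhat (φ : Grid m → ℝ) (k : Grid m) : ℂ :=
  ∑ p : Grid m, (φ p : ℂ) * chi m (-(dotg m k p))

omit [NeZero m] in
lemma dotg_sub_right (k p q : Grid m) : dotg m k p - dotg m k q = dotg m k (p - q) := by
  simp only [dotg, Prod.fst_sub, Prod.snd_sub]
  ring

omit [NeZero m] in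
lemma dotg_add_right (k p q : Grid m) : dotg m k (p + q) = dotg m k p + dotg m k q := by
  simp only [dotg, Prod.fst_add, Prod.snd_add]
  ring

omit [NeZero m] in
lemma dotg_comm (k p : Grid m) : dotg m k p = dotg m p k := by
  simp only [dotg]
  ring

lemma inv_formula (φ : Grid m → ℝ) (p : Grid m) :
    ∑ k : Grid m, fhat m φ k * chi m (dotg m k p) = (m:ℂ)^3 * (φ p : ℂ) := by
  have step1 : ∀ k, fhat m φ k * chi m (dotg m k p)
      = ∑ q : Grid m, (φ q : ℂ) * chi m (dotg m k (p - q)) := by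
    intro k
    rw [fhat, Finset.sum_mul]
    refine Finset.sum_congr rfl fun q _ => ?_
    rw [mul_assoc, ← chi_add]
    congr 2
    rw [← dotg_sub_right]
    ring
  simp_rw [step1]
  rw [Finset.sum_comm]
  have step2 : ∀ q, ∑ k : Grid m, (φ q:ℂ) * chi m (dotg m k (p - q))
      = (φ q : ℂ) * (if p - q = 0 then (m:ℂ)^3 else 0) := by
    intro q
    rw [← Finset.mul_sum]
    congr 1
    rw [← osum3 m (p - q)]
    exact Finset.sum_congr rfl fun k _ => by rw [dotg_comm]
  simp_rw [step2, sub_eq_zero]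
  simp [Finset.sum_ite_eq, mul_comm]

lemma conj_fhat (ψ : Grid m → ℝ) (k : Grid m) :
    (starRingEnd ℂ) (fhat m ψ k) = ∑ q : Grid m, (ψ q:ℂ) * chi m (dotg m k q) := by
  rw [fhat, map_sum]
  refine Finset.sum_congr rfl fun q _ => ?_
  rw [map_mul, Complex.conj_ofReal, conj_chi, neg_neg]

lemma parseval (ψ : Grid m → ℝ) :
    ∑ k : Grid m, Complex.normSq (fhat m ψ k) = (m:ℝ)^3 * ∑ p : Grid m, (ψ p)^2 := by
  have key : ∑ k : Grid m, (starRingEnd ℂ) (fhat m ψ k) * fhat m ψ k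
      = (m:ℂ)^3 * ∑ p : Grid m, ((ψ p : ℂ))^2 := by
    calc ∑ k : Grid m, (starRingEnd ℂ) (fhat m ψ k) * fhat m ψ k
        = ∑ k : Grid m, ∑ q : Grid m, (ψ q:ℂ) * (fhat m ψ k * chi m (dotg m k q)) := by
          refine Finset.sum_congr rfl fun k _ => ?_
          rw [conj_fhat, Finset.sum_mul]
          exact Finset.sum_congr rfl fun q _ => by ring
      _ = ∑ q : Grid m, ∑ k : Grid m, (ψ q:ℂ) * (fhat m ψ k * chi m (dotg m k q)) :=
          Finset.sum_comm
      _ = ∑ q : Grid m, (ψ q:ℂ) * ((m:ℂ)^3 * (ψ q:ℂ)) := by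
          refine Finset.sum_congr rfl fun q _ => ?_
          rw [← Finset.mul_sum, inv_formula]
      _ = (m:ℂ)^3 * ∑ p : Grid m, ((ψ p : ℂ))^2 := by
          rw [Finset.mul_sum]
          exact Finset.sum_congr rfl fun q _ => by ring
  have lhs_eq : ((∑ k : Grid m, Complex.normSq (fhat m ψ k) : ℝ) : ℂ)
      = ∑ k : Grid m, (starRingEnd ℂ) (fhat m ψ k) * fhat m ψ k := by
    push_cast
    exact Finset.sum_congr rfl fun k _ => by
      rw [mul_comm, Complex.mul_conj]
  have : ((∑ k : Grid m, Complex.normSq (fhat m ψ k) : ℝ) : ℂ)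
      = (((m:ℝ)^3 * ∑ p : Grid m, (ψ p)^2 : ℝ) : ℂ) := by
    rw [lhs_eq, key]
    push_cast
    ring
  exact_mod_cast this

lemma fhat_translate (φ : Grid m → ℝ) (s k : Grid m) :
    fhat m (fun p => φ (p + s)) k = chi m (dotg m k s) * fhat m φ k := by
  rw [fhat, fhat, Finset.mul_sum]
  refine Fintype.sum_equiv (Equiv.addRight s) _ _ fun p => ?_
  simp only [Equiv.coe_addRight]
  have h1 : chi m (-(dotg m k (p+s))) = chi m (-(dotg m k p)) * chi m (-(dotg m k s)) := by
    rw [← chi_add]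
    congr 1
    rw [dotg_add_right]
    ring
  have h2 : chi m (dotg m k s) * chi m (-(dotg m k s)) = 1 := by
    rw [← chi_add, add_neg_cancel, chi_zero]
  rw [h1]
  linear_combination (-1 : ℂ) * ((φ (p+s) : ℝ):ℂ) * chi m (-(dotg m k p)) * h2

omit [NeZero m] in
lemma lap_pts (h : ℝ) (φ : Grid m → ℝ) (p : Grid m) :
    lapH h φ p = (φ (p + ((1:ZMod m),(0:ZMod m),(0:ZMod m))) + φ (p + (-1,0,0)) + φ (p + (0,1,0))
      + φ (p + (0,-1,0)) + φ (p + (0,0,1)) + φ (p + (0,0,-1)) - 6 * φ p) / h ^ 2 := by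
  obtain ⟨a, b, c⟩ := p
  simp [lapH, Prod.mk_add_mk, sub_eq_add_neg]

lemma fhat_lap (h : ℝ) (φ : Grid m → ℝ) (k : Grid m) :
    fhat m (lapH h φ) k = ((chi m k.1 + chi m (-k.1) + chi m k.2.1 + chi m (-k.2.1)
        + chi m k.2.2 + chi m (-k.2.2) - 6) / (h:ℂ)^2) * fhat m φ k := by
  have key : ∀ p : Grid m, ((lapH h φ p : ℝ) : ℂ) * chi m (-(dotg m k p)) =
      ((φ (p + ((1:ZMod m),(0:ZMod m),(0:ZMod m))) : ℂ) * chi m (-(dotg m k p))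
       + (φ (p + (-1,0,0)) : ℂ) * chi m (-(dotg m k p))
       + (φ (p + (0,1,0)) : ℂ) * chi m (-(dotg m k p))
       + (φ (p + (0,-1,0)) : ℂ) * chi m (-(dotg m k p))
       + (φ (p + (0,0,1)) : ℂ) * chi m (-(dotg m k p))
       + (φ (p + (0,0,-1)) : ℂ) * chi m (-(dotg m k p))
       - 6 * ((φ p : ℂ) * chi m (-(dotg m k p)))) / (h:ℂ)^2 := by
    intro p
    rw [lap_pts]
    push_cast
    ring
  have tr : ∀ s : Grid m, ∑ p : Grid m, (φ (p + s) : ℂ) * chi m (-(dotg m k p))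
      = chi m (dotg m k s) * fhat m φ k := by
    intro s
    rw [← fhat_translate m φ s k, fhat]
  rw [fhat]
  simp_rw [key]
  rw [← Finset.sum_div]
  simp_rw [Finset.sum_sub_distrib, Finset.sum_add_distrib, ← Finset.mul_sum]
  rw [tr, tr, tr, tr, tr, tr]
  have d1 : dotg m k ((1:ZMod m),(0:ZMod m),(0:ZMod m)) = k.1 := by simp [dotg]
  have d2 : dotg m k ((-1:ZMod m),(0:ZMod m),(0:ZMod m)) = -k.1 := by simp [dotg]
  have d3 : dotg m k ((0:ZMod m),(1:ZMod m),(0:ZMod m)) = k.2.1 := by simp [dotg]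
  have d4 : dotg m k ((0:ZMod m),(-1:ZMod m),(0:ZMod m)) = -k.2.1 := by simp [dotg]
  have d5 : dotg m k ((0:ZMod m),(0:ZMod m),(1:ZMod m)) = k.2.2 := by simp [dotg]
  have d6 : dotg m k ((0:ZMod m),(0:ZMod m),(-1:ZMod m)) = -k.2.2 := by simp [dotg]
  rw [d1, d2, d3, d4, d5, d6, ← fhat]
  ring

/-- The (real, nonnegative) eigenvalue of `-Δ_h` at frequency `k`. -/
noncomputable def lam (h : ℝ) (k : Grid m) : ℝ :=
  (6 - 2*(Real.cos (2*Real.pi*k.1.val/m) + Real.cos (2*Real.pi*k.2.1.val/m)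
    + Real.cos (2*Real.pi*k.2.2.val/m)))/h^2

lemma pair_chi (a : ZMod m) :
    chi m a + chi m (-a) = ((2 * Real.cos (2*Real.pi*a.val/m) : ℝ):ℂ) := by
  rw [← conj_chi, Complex.add_conj]
  rw [chi, ee_re]
  push_cast
  ring

lemma fhat_lap' (h : ℝ) (φ : Grid m → ℝ) (k : Grid m) :
    fhat m (lapH h φ) k = ((-(lam m h k) : ℝ) : ℂ) * fhat m φ k := by
  rw [fhat_lap]
  congr 1
  rw [show chi m k.1 + chi m (-k.1) + chi m k.2.1 + chi m (-k.2.1)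
        + chi m k.2.2 + chi m (-k.2.2) - 6
      = (chi m k.1 + chi m (-k.1)) + ((chi m k.2.1 + chi m (-k.2.1))
        + (chi m k.2.2 + chi m (-k.2.2))) - 6 by ring,
    pair_chi, pair_chi, pair_chi, lam]
  push_cast
  ring

lemma normSq_fhat_lap (h : ℝ) (φ : Grid m → ℝ) (k : Grid m) :
    Complex.normSq (fhat m (lapH h φ) k) = (lam m h k)^2 * Complex.normSq (fhat m φ k) := by
  rw [fhat_lap', Complex.normSq_mul, Complex.normSq_ofReal]
  ring

/-- symmetric representative size of a frequency. -/
def nn (a : ZMod m) : ℕ := min a.val (m - a.val)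

lemma sin_lb (a : ZMod m) : 2*(nn m a : ℝ)/m ≤ Real.sin (Real.pi * a.val / m) := by
  have hm : (0:ℝ) < m := by
    have := Nat.pos_of_ne_zero (NeZero.ne m); exact_mod_cast this
  have hπ : (0:ℝ) < Real.pi := Real.pi_pos
  have hv : a.val < m := ZMod.val_lt a
  rcases le_or_gt (a.val) (m - a.val) with hle | hlt
  · have hnn : nn m a = a.val := min_eq_left hle
    have h2v : 2 * a.val ≤ m := by omega
    have h2v' : (2:ℝ) * a.val ≤ m := by exact_mod_cast h2v
    have hx0 : 0 ≤ Real.pi * a.val / m := by positivity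
    have hx1 : Real.pi * a.val / m ≤ Real.pi / 2 := by
      rw [div_le_div_iff₀ hm (by norm_num)]
      nlinarith
    have := Real.mul_le_sin hx0 hx1
    rw [hnn]
    calc 2*(a.val:ℝ)/m = 2 / Real.pi * (Real.pi * a.val / m) := by field_simp
      _ ≤ _ := this
  · have hnn : nn m a = m - a.val := min_eq_right (le_of_lt hlt)
    have hcast : ((m - a.val : ℕ) : ℝ) = (m:ℝ) - a.val := by
      push_cast [Nat.cast_sub (le_of_lt hv)]; ring
    have hsin : Real.sin (Real.pi * a.val / m) = Real.sin (Real.pi * ((m:ℝ) - a.val) / m) := by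
      rw [show Real.pi * ((m:ℝ) - a.val) / m = Real.pi - Real.pi * a.val / m by field_simp,
        Real.sin_pi_sub]
    have h2v : 2 * (m - a.val) ≤ m := by omega
    have h2v' : (2:ℝ) * ((m:ℝ) - a.val) ≤ m := by
      rw [← hcast]; exact_mod_cast h2v
    have hma : (0:ℝ) ≤ (m:ℝ) - a.val := by
      have : (a.val:ℝ) < m := by exact_mod_cast hv
      linarith
    have hx0 : 0 ≤ Real.pi * ((m:ℝ) - a.val) / m := by positivity
    have hx1 : Real.pi * ((m:ℝ) - a.val) / m ≤ Real.pi / 2 := by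
      rw [div_le_div_iff₀ hm (by norm_num)]
      nlinarith
    have := Real.mul_le_sin hx0 hx1
    rw [hnn, hsin, hcast]
    calc 2*((m:ℝ) - a.val)/m = 2 / Real.pi * (Real.pi * ((m:ℝ) - a.val) / m) := by
          field_simp
      _ ≤ _ := this

lemma lam_eq_sin (h : ℝ) (k : Grid m) :
    lam m h k = 4 * (Real.sin (Real.pi * k.1.val / m)^2 + Real.sin (Real.pi * k.2.1.val / m)^2
      + Real.sin (Real.pi * k.2.2.val / m)^2) / h^2 := by
  rw [lam]
  have hc : ∀ v : ℕ, Real.cos (2*Real.pi*v/m) = 1 - 2 * Real.sin (Real.pi * v / m)^2 := by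
    intro v
    have := Real.sin_sq_eq_half_sub (Real.pi * v / m)
    rw [show 2 * (Real.pi * v / m) = 2*Real.pi*v/m by ring] at this
    linarith
  rw [hc, hc, hc]
  ring

lemma lam_nonneg (h : ℝ) (k : Grid m) : 0 ≤ lam m h k := by
  rw [lam_eq_sin]
  positivity

lemma lam_lb (h : ℝ) (hh : 0 < h) (k : Grid m) :
    (16/(h*m)^2) * ((nn m k.1:ℝ)^2 + (nn m k.2.1:ℝ)^2 + (nn m k.2.2:ℝ)^2) ≤ lam m h k := by
  have hm : (0:ℝ) < m := by
    have := Nat.pos_of_ne_zero (NeZero.ne m); exact_mod_cast this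
  rw [lam_eq_sin]
  have key : ∀ a : ZMod m, 4 * (nn m a : ℝ)^2/m^2 ≤ Real.sin (Real.pi * a.val / m)^2 := by
    intro a
    have h1 := sin_lb m a
    have h0 : 0 ≤ 2*(nn m a : ℝ)/m := by positivity
    calc 4 * (nn m a : ℝ)^2/m^2 = (2*(nn m a : ℝ)/m)^2 := by field_simp; ring
      _ ≤ Real.sin (Real.pi * a.val / m)^2 := by
          apply pow_le_pow_left₀ h0 h1
  have hsum : (4*(nn m k.1:ℝ)^2 + 4*(nn m k.2.1:ℝ)^2 + 4*(nn m k.2.2:ℝ)^2)/(m:ℝ)^2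
      ≤ Real.sin (Real.pi * k.1.val / m)^2 + Real.sin (Real.pi * k.2.1.val / m)^2
        + Real.sin (Real.pi * k.2.2.val / m)^2 := by
    have := add_le_add (add_le_add (key k.1) (key k.2.1)) (key k.2.2)
    calc (4*(nn m k.1:ℝ)^2 + 4*(nn m k.2.1:ℝ)^2 + 4*(nn m k.2.2:ℝ)^2)/(m:ℝ)^2
        = 4 * (nn m k.1:ℝ)^2/(m:ℝ)^2 + 4 * (nn m k.2.1:ℝ)^2/(m:ℝ)^2
          + 4 * (nn m k.2.2:ℝ)^2/(m:ℝ)^2 := by ring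
      _ ≤ _ := this
  calc (16/(h*m)^2) * ((nn m k.1:ℝ)^2 + (nn m k.2.1:ℝ)^2 + (nn m k.2.2:ℝ)^2)
      = 4 * ((4*(nn m k.1:ℝ)^2 + 4*(nn m k.2.1:ℝ)^2 + 4*(nn m k.2.2:ℝ)^2)/(m:ℝ)^2) / h^2 := by
        field_simp
        ring
    _ ≤ _ := by gcongr

omit [NeZero m] in
lemma tele_eq (a : ℕ) (ha : 2 ≤ a) : ∀ n : ℕ, a ≤ n →
    ∑ j ∈ Finset.Ico a n, (1:ℝ)/(((j:ℝ)-1)*j) = 1/((a:ℝ)-1) - 1/((n:ℝ)-1) := by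
  refine Nat.le_induction ?_ ?_
  · simp
  · intro n hn ih
    rw [Finset.sum_Ico_succ_top hn, ih]
    have hn2 : 2 ≤ n := le_trans ha hn
    have h1 : (1:ℝ) ≤ (n:ℝ) := by exact_mod_cast le_trans (by norm_num) hn2
    have h0 : (n:ℝ) - 1 ≠ 0 := by
      intro hcon
      have : (n:ℝ) = 1 := by linarith
      have : n = 1 := by exact_mod_cast this
      omega
    have h0' : (n:ℝ) ≠ 0 := by positivity
    have hd : (1:ℝ)/(((n:ℝ)-1)*n) = 1/((n:ℝ)-1) - 1/(n:ℝ) := by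
      field_simp
      ring
    rw [hd]
    push_cast
    ring

omit [NeZero m] in
lemma sum_inv_r (r : ℝ) (hr : 1 ≤ r) (n : ℕ) :
    ∑ j ∈ Finset.range n, 1/(r + (j:ℝ)^2) ≤ 4/Real.sqrt r := by
  have hr0 : (0:ℝ) < r := lt_of_lt_of_le one_pos hr
  have hsq1 : (1:ℝ) ≤ Real.sqrt r := by
    rw [show (1:ℝ) = Real.sqrt 1 by simp]
    exact Real.sqrt_le_sqrt hr
  have hsq0 : (0:ℝ) < Real.sqrt r := lt_of_lt_of_le one_pos hsq1
  have hmul : Real.sqrt r * Real.sqrt r = r := Real.mul_self_sqrt (le_of_lt hr0)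
  set s := Nat.floor (Real.sqrt r) with hs
  have hs1 : 1 ≤ s := Nat.le_floor (by exact_mod_cast hsq1)
  have hsr : (s:ℝ) ≤ Real.sqrt r := Nat.floor_le (le_of_lt hsq0)
  have hsr2 : Real.sqrt r ≤ 2*s := by
    have := Nat.lt_floor_add_one (Real.sqrt r)
    have hs1' : (1:ℝ) ≤ (s:ℝ) := by exact_mod_cast hs1
    linarith
  have hs0 : (0:ℝ) < s := by exact_mod_cast hs1
  have head : ∑ j ∈ Finset.range (s+1), 1/(r + (j:ℝ)^2) ≤ 2/Real.sqrt r := by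
    have hterm : ∀ j ∈ Finset.range (s+1), 1/(r + (j:ℝ)^2) ≤ 1/r := by
      intro j _
      apply one_div_le_one_div_of_le hr0
      nlinarith [sq_nonneg (j:ℝ)]
    calc ∑ j ∈ Finset.range (s+1), 1/(r + (j:ℝ)^2) ≤ ∑ j ∈ Finset.range (s+1), 1/r :=
          Finset.sum_le_sum hterm
      _ = ((s:ℝ)+1)/r := by
          rw [Finset.sum_const, Finset.card_range]
          push_cast; ring
      _ ≤ (2*Real.sqrt r)/r := by
          gcongr
          linarith
      _ = 2/Real.sqrt r := by
          rw [div_eq_div_iff (ne_of_gt hr0) (ne_of_gt hsq0)]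
          nlinarith
  have tail : ∑ j ∈ Finset.Ico (s+1) n, 1/(r + (j:ℝ)^2) ≤ 2/Real.sqrt r := by
    have hterm : ∀ j ∈ Finset.Ico (s+1) n, 1/(r + (j:ℝ)^2) ≤ (1:ℝ)/(((j:ℝ)-1)*j) := by
      intro j hj
      have hj2 : s+1 ≤ j := (Finset.mem_Ico.1 hj).1
      have hj2' : (2:ℝ) ≤ (j:ℝ) := by exact_mod_cast le_trans (by omega) hj2
      apply one_div_le_one_div_of_le
      · nlinarith
      · nlinarith [sq_nonneg ((j:ℝ)-1)]
    have hstep : ∑ j ∈ Finset.Ico (s+1) n, (1:ℝ)/(((j:ℝ)-1)*j) ≤ 1/(s:ℝ) := by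
      rcases le_or_gt (s+1) n with hn | hn
      · rw [tele_eq (s+1) (by omega) n hn]
        have h1n : (1:ℝ) < (n:ℝ) := by
          have : 2 ≤ n := by omega
          exact_mod_cast lt_of_lt_of_le (by norm_num) this
        have h2 : (0:ℝ) ≤ 1/((n:ℝ)-1) := one_div_nonneg.2 (by linarith)
        have h3 : (((s:ℕ)+1:ℕ):ℝ)-1 = (s:ℝ) := by push_cast; ring
        rw [h3]
        linarith
      · rw [Finset.Ico_eq_empty (by omega)]
        simp only [Finset.sum_empty]
        positivity
    calc ∑ j ∈ Finset.Ico (s+1) n, 1/(r + (j:ℝ)^2)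
        ≤ ∑ j ∈ Finset.Ico (s+1) n, (1:ℝ)/(((j:ℝ)-1)*j) := Finset.sum_le_sum hterm
      _ ≤ 1/(s:ℝ) := hstep
      _ ≤ 2/Real.sqrt r := by
          rw [div_le_div_iff₀ hs0 hsq0]
          linarith
  rcases le_or_gt n (s+1) with hn | hn
  · have hsub : ∑ j ∈ Finset.range n, 1/(r + (j:ℝ)^2)
        ≤ ∑ j ∈ Finset.range (s+1), 1/(r + (j:ℝ)^2) := by
      apply Finset.sum_le_sum_of_subset_of_nonneg (Finset.range_subset_range.2 hn)
      intro j _ _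
      positivity
    have h24 : (2:ℝ)/Real.sqrt r ≤ 4/Real.sqrt r := by
      gcongr
      norm_num
    exact le_trans (le_trans hsub head) h24
  · rw [Finset.range_eq_Ico, ← Finset.sum_Ico_consecutive _ (Nat.zero_le (s+1)) (le_of_lt hn),
      ← Finset.range_eq_Ico]
    calc _ ≤ 2/Real.sqrt r + 2/Real.sqrt r := add_le_add head tail
      _ = 4/Real.sqrt r := by ring

lemma zmod_sum_eq (G : ℕ → ℝ) :
    ∑ b : ZMod m, G (ZMod.val b) = ∑ v ∈ Finset.range m, G v := by
  refine Finset.sum_nbij' (fun b => ZMod.val b) (fun v => (v : ZMod m)) ?_ ?_ ?_ ?_ ?_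
  · intro b _
    exact Finset.mem_range.2 (ZMod.val_lt b)
  · intro v _
    exact Finset.mem_univ _
  · intro b _
    exact ZMod.natCast_rightInverse b
  · intro v hv
    exact ZMod.val_cast_of_lt (Finset.mem_range.1 hv)
  · intro b _
    rfl

lemma fold (F : ℕ → ℝ) (hF : ∀ j, 0 ≤ F j) :
    ∑ b : ZMod m, F (nn m b) ≤ 2 * ∑ j ∈ Finset.range (m/2 + 1), F j := by
  have hm : 0 < m := Nat.pos_of_ne_zero (NeZero.ne m)
  have step1 : ∑ b : ZMod m, F (nn m b) = ∑ v ∈ Finset.range m, F (min v (m - v)) :=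
    zmod_sum_eq m (fun v => F (min v (m - v)))
  have hsplit : m/2 + 1 ≤ m ∨ m = 1 := by omega
  rcases eq_or_ne m 1 with h1 | h1
  · subst h1
    rw [step1]
    simp only [Finset.range_one, Finset.sum_singleton]
    have := hF 0
    norm_num
    linarith [hF 0]
  have hM : m/2 + 1 ≤ m := by omega
  rw [step1, Finset.range_eq_Ico, ← Finset.sum_Ico_consecutive _ (Nat.zero_le (m/2+1)) hM,
    ← Finset.range_eq_Ico]
  have first : ∑ v ∈ Finset.range (m/2+1), F (min v (m - v)) = ∑ v ∈ Finset.range (m/2+1), F v := by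
    refine Finset.sum_congr rfl fun v hv => ?_
    have hv' : v ≤ m/2 := by
      have := Finset.mem_range.1 hv; omega
    have : min v (m - v) = v := min_eq_left (by omega)
    rw [this]
  have second : ∑ v ∈ Finset.Ico (m/2+1) m, F (min v (m - v)) ≤ ∑ j ∈ Finset.range (m/2+1), F j := by
    have key : ∑ v ∈ Finset.Ico (m/2+1) m, F (min v (m - v)) = ∑ j ∈ Finset.Ico 1 (m - m/2), F j := by
      refine Finset.sum_nbij' (fun v => m - v) (fun j => m - j) ?_ ?_ ?_ ?_ ?_
      · intro v hv
        have := Finset.mem_Ico.1 hv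
        simp only [Finset.mem_Ico]
        omega
      · intro j hj
        have := Finset.mem_Ico.1 hj
        simp only [Finset.mem_Ico]
        omega
      · intro v hv
        have := Finset.mem_Ico.1 hv
        omega
      · intro j hj
        have := Finset.mem_Ico.1 hj
        omega
      · intro v hv
        have hm2 := Finset.mem_Ico.1 hv
        have hmin : min v (m - v) = m - v := min_eq_right (by omega)
        simp only [hmin]
    rw [key]
    apply Finset.sum_le_sum_of_subset_of_nonneg
    · intro j hj
      have := Finset.mem_Ico.1 hj
      exact Finset.mem_range.2 (by omega)
    · intro j _ _
      exact hF j
  rw [first]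
  linarith [second]

lemma sum1d (r : ℝ) (hr : 1 ≤ r) :
    ∑ b : ZMod m, 1/(r + (nn m b:ℝ)^2) ≤ 8/Real.sqrt r := by
  have hr0 : (0:ℝ) < r := lt_of_lt_of_le one_pos hr
  have := fold m (fun j => 1/(r + (j:ℝ)^2)) (fun j => by positivity)
  have h2 := sum_inv_r r hr (m/2 + 1)
  calc ∑ b : ZMod m, 1/(r + (nn m b:ℝ)^2) ≤ 2 * ∑ j ∈ Finset.range (m/2+1), 1/(r + (j:ℝ)^2) := this
    _ ≤ 2 * (4/Real.sqrt r) := by linarith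
    _ = 8/Real.sqrt r := by ring

lemma T_bound : ∑ k : Grid m, 1/((1 + (nn m k.1:ℝ)^2 + (nn m k.2.1:ℝ)^2)
    * (1 + (nn m k.1:ℝ)^2 + (nn m k.2.2:ℝ)^2)) ≤ 512 := by
  have hg : ∀ a : ZMod m, ∑ b : ZMod m, 1/(1 + (nn m a:ℝ)^2 + (nn m b:ℝ)^2)
      ≤ 8/Real.sqrt (1 + (nn m a:ℝ)^2) := by
    intro a
    have h1 : (1:ℝ) ≤ 1 + (nn m a:ℝ)^2 := by nlinarith [sq_nonneg (nn m a:ℝ)]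
    have := sum1d m (1 + (nn m a:ℝ)^2) h1
    calc ∑ b : ZMod m, 1/(1 + (nn m a:ℝ)^2 + (nn m b:ℝ)^2)
        = ∑ b : ZMod m, 1/((1 + (nn m a:ℝ)^2) + (nn m b:ℝ)^2) := by
          refine Finset.sum_congr rfl fun b _ => ?_
          ring_nf
      _ ≤ 8/Real.sqrt (1 + (nn m a:ℝ)^2) := this
  have hg0 : ∀ a : ZMod m, (0:ℝ) ≤ ∑ b : ZMod m, 1/(1 + (nn m a:ℝ)^2 + (nn m b:ℝ)^2) := by
    intro a
    apply Finset.sum_nonneg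
    intro b _
    positivity
  have factored : ∑ k : Grid m, 1/((1 + (nn m k.1:ℝ)^2 + (nn m k.2.1:ℝ)^2)
      * (1 + (nn m k.1:ℝ)^2 + (nn m k.2.2:ℝ)^2))
      = ∑ a : ZMod m, (∑ b : ZMod m, 1/(1 + (nn m a:ℝ)^2 + (nn m b:ℝ)^2))
        * (∑ c : ZMod m, 1/(1 + (nn m a:ℝ)^2 + (nn m c:ℝ)^2)) := by
    rw [Fintype.sum_prod_type]
    refine Finset.sum_congr rfl fun a _ => ?_
    rw [Fintype.sum_prod_type, Finset.sum_mul_sum]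
    refine Finset.sum_congr rfl fun b _ => ?_
    refine Finset.sum_congr rfl fun c _ => ?_
    simp only []
    rw [div_mul_div_comm, one_mul]
  rw [factored]
  have sq_bound : ∀ a : ZMod m,
      (∑ b : ZMod m, 1/(1 + (nn m a:ℝ)^2 + (nn m b:ℝ)^2))
        * (∑ c : ZMod m, 1/(1 + (nn m a:ℝ)^2 + (nn m c:ℝ)^2)) ≤ 64/(1 + (nn m a:ℝ)^2) := by
    intro a
    have h1 : (0:ℝ) < 1 + (nn m a:ℝ)^2 := by positivity
    have hs := Real.sq_sqrt (le_of_lt h1)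
    calc _ ≤ (8/Real.sqrt (1 + (nn m a:ℝ)^2)) * (8/Real.sqrt (1 + (nn m a:ℝ)^2)) :=
          mul_le_mul (hg a) (hg a) (hg0 a) (by positivity)
      _ = 64/(1 + (nn m a:ℝ)^2) := by
          rw [div_mul_div_comm, Real.mul_self_sqrt (le_of_lt h1)]
          norm_num
  calc ∑ a : ZMod m, (∑ b : ZMod m, 1/(1 + (nn m a:ℝ)^2 + (nn m b:ℝ)^2))
        * (∑ c : ZMod m, 1/(1 + (nn m a:ℝ)^2 + (nn m c:ℝ)^2))
      ≤ ∑ a : ZMod m, 64/(1 + (nn m a:ℝ)^2) := Finset.sum_le_sum fun a _ => sq_bound a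
    _ = 64 * ∑ a : ZMod m, 1/(1 + (nn m a:ℝ)^2) := by
        rw [Finset.mul_sum]
        refine Finset.sum_congr rfl fun a _ => ?_
        ring
    _ ≤ 64 * (8/Real.sqrt 1) := by
        have := sum1d m 1 le_rfl
        have h8 : (0:ℝ) ≤ 8/Real.sqrt 1 := by positivity
        nlinarith [this]
    _ ≤ 512 := by rw [Real.sqrt_one]; norm_num

set_option maxHeartbeats 1000000 in
lemma S_bound (L h : ℝ) (hL : 0 < L) (hh : 0 < h) (hhm : h * m = L) :
    ∑ k : Grid m, 1/(1 + (lam m h k)^2) ≤ 1024 * max 1 (L^4/256) := by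
  have hT := T_bound m
  have hmax1 : (1:ℝ) ≤ max 1 (L^4/256) := le_max_left _ _
  have hmax2 : L^4/256 ≤ max 1 (L^4/256) := le_max_right _ _
  have hmax0 : (0:ℝ) < max 1 (L^4/256) := lt_of_lt_of_le one_pos hmax1
  have hL4 : (0:ℝ) < L^4 := by positivity
  have pointwise : ∀ k : Grid m, 1/(1 + (lam m h k)^2)
      ≤ (2 * max 1 (L^4/256)) * (1/((1 + (nn m k.1:ℝ)^2 + (nn m k.2.1:ℝ)^2)
        * (1 + (nn m k.1:ℝ)^2 + (nn m k.2.2:ℝ)^2))) := by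
    intro k
    set n1 := (nn m k.1 : ℝ) with hn1d
    set n2 := (nn m k.2.1 : ℝ) with hn2d
    set n3 := (nn m k.2.2 : ℝ) with hn3d
    have hn1 : 0 ≤ n1 := Nat.cast_nonneg _
    have hn2 : 0 ≤ n2 := Nat.cast_nonneg _
    have hn3 : 0 ≤ n3 := Nat.cast_nonneg _
    set N := n1^2 + n2^2 + n3^2 with hN
    have hN0 : 0 ≤ N := by positivity
    have hlam0 : 0 ≤ lam m h k := lam_nonneg m h k
    have hlb : (16/L^2) * N ≤ lam m h k := by
      have := lam_lb m h hh k
      rwa [hhm] at this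
    have hlam2 : (256/L^4) * N^2 ≤ (lam m h k)^2 := by
      have h16 : 0 ≤ (16/L^2) * N := by positivity
      calc (256/L^4) * N^2 = ((16/L^2) * N)^2 := by
            field_simp
            ring
        _ ≤ (lam m h k)^2 := by
            apply pow_le_pow_left₀ h16 hlb
    have key : (1 + N)^2 ≤ (2 * max 1 (L^4/256)) * (1 + (lam m h k)^2) := by
      have e1 : (1+N)^2 ≤ 2*(1 + N^2) := by nlinarith [sq_nonneg (N - 1)]
      have e2 : 1 + N^2 ≤ max 1 (L^4/256) * (1 + (256/L^4) * N^2) := by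
        have hq : (0:ℝ) ≤ (256/L^4) * N^2 := by positivity
        have h1 : (L^4/256) * ((256/L^4) * N^2) ≤ max 1 (L^4/256) * ((256/L^4) * N^2) :=
          mul_le_mul_of_nonneg_right hmax2 hq
        have h2 : (L^4/256) * ((256/L^4) * N^2) = N^2 := by field_simp
        nlinarith
      have e3 : max 1 (L^4/256) * (1 + (256/L^4) * N^2)
          ≤ max 1 (L^4/256) * (1 + (lam m h k)^2) := by
        apply mul_le_mul_of_nonneg_left ?_ (le_of_lt hmax0)
        linarith
      nlinarith
    have prod_le : (1 + n1^2 + n2^2) * (1 + n1^2 + n3^2) ≤ (1 + N)^2 := by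
      nlinarith [sq_nonneg n2, sq_nonneg n3, sq_nonneg (n2*n3), sq_nonneg n1, sq_nonneg (n1^2)]
    have hprod0 : (0:ℝ) < (1 + n1^2 + n2^2) * (1 + n1^2 + n3^2) := by positivity
    have hlamsq0 : (0:ℝ) < 1 + (lam m h k)^2 := by positivity
    rw [mul_one_div, div_le_div_iff₀ hlamsq0 hprod0, one_mul]
    calc (1 + n1^2 + n2^2) * (1 + n1^2 + n3^2) ≤ (1+N)^2 := prod_le
      _ ≤ (2 * max 1 (L^4/256)) * (1 + (lam m h k)^2) := key
  calc ∑ k : Grid m, 1/(1 + (lam m h k)^2)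
      ≤ ∑ k : Grid m, (2 * max 1 (L^4/256)) * (1/((1 + (nn m k.1:ℝ)^2 + (nn m k.2.1:ℝ)^2)
        * (1 + (nn m k.1:ℝ)^2 + (nn m k.2.2:ℝ)^2))) := Finset.sum_le_sum fun k _ => pointwise k
    _ = (2 * max 1 (L^4/256)) * ∑ k : Grid m, 1/((1 + (nn m k.1:ℝ)^2 + (nn m k.2.1:ℝ)^2)
        * (1 + (nn m k.1:ℝ)^2 + (nn m k.2.2:ℝ)^2)) := by rw [← Finset.mul_sum]
    _ ≤ (2 * max 1 (L^4/256)) * 512 := by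
        apply mul_le_mul_of_nonneg_left hT (by positivity)
    _ = 1024 * max 1 (L^4/256) := by ring

end DSob


set_option maxHeartbeats 1000000 in
/-- Three-dimensional discrete Sobolev inequality: `‖φ‖_∞ ≤ C ‖φ‖_{2,2}` with a constant `C`
depending only on `L`, for every odd positive integer `m`. -/
theorem stmt7 (L : ℝ) (hL : 0 < L) :
    ∃ C : ℝ, 0 < C ∧
      ∀ (m : ℕ) [NeZero m], Odd m →
        ∀ φ : Grid m → ℝ, normInf φ ≤ C * Real.sqrt (h22sq (L / m) φ) := by
  set K := 1024 * max 1 (L^4/256) with hK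
  have hmax1 : (1:ℝ) ≤ max 1 (L^4/256) := le_max_left _ _
  have hK0 : (0:ℝ) < K := by nlinarith
  have hL3 : (0:ℝ) < L^3 := by positivity
  have hKL0 : (0:ℝ) < K/L^3 := div_pos hK0 hL3
  refine ⟨Real.sqrt (K/L^3), Real.sqrt_pos.2 hKL0, ?_⟩
  intro m inst hodd φ
  set h := L/(m:ℝ) with hh_def
  have hm0 : (0:ℝ) < m := by
    have := Nat.pos_of_ne_zero (NeZero.ne m); exact_mod_cast this
  have hm3 : (0:ℝ) < (m:ℝ)^3 := by positivity
  have hh : 0 < h := div_pos hL hm0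
  have hhm : h * m = L := div_mul_cancel₀ L (ne_of_gt hm0)
  have hm3L : h^3*(m:ℝ)^3 = L^3 := by rw [← mul_pow, hhm]
  set A := (∑ p : Grid m, (φ p)^2) + ∑ p : Grid m, (lapH h φ p)^2 with hA
  have hA0 : 0 ≤ A := by positivity
  set S := ∑ k : Grid m, 1/(1 + (DSob.lam m h k)^2) with hS
  have hS0 : 0 ≤ S := Finset.sum_nonneg fun k _ => by positivity
  have hSK : S ≤ K := DSob.S_bound m L h hL hh hhm
  have hsum : ∑ k : Grid m, (1 + (DSob.lam m h k)^2) * Complex.normSq (DSob.fhat m φ k)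
      = (m:ℝ)^3 * A := by
    have p1 := DSob.parseval m φ
    have p2 := DSob.parseval m (lapH h φ)
    have p3 : ∀ k, (DSob.lam m h k)^2 * Complex.normSq (DSob.fhat m φ k)
        = Complex.normSq (DSob.fhat m (lapH h φ) k) :=
      fun k => (DSob.normSq_fhat_lap m h φ k).symm
    calc ∑ k : Grid m, (1 + (DSob.lam m h k)^2) * Complex.normSq (DSob.fhat m φ k)
        = ∑ k : Grid m, (Complex.normSq (DSob.fhat m φ k)
            + (DSob.lam m h k)^2 * Complex.normSq (DSob.fhat m φ k)) := by
          refine Finset.sum_congr rfl fun k _ => ?_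
          ring
      _ = (∑ k : Grid m, Complex.normSq (DSob.fhat m φ k))
            + ∑ k : Grid m, (DSob.lam m h k)^2 * Complex.normSq (DSob.fhat m φ k) :=
          Finset.sum_add_distrib
      _ = (m:ℝ)^3 * (∑ p : Grid m, (φ p)^2)
            + ∑ k : Grid m, Complex.normSq (DSob.fhat m (lapH h φ) k) := by
          rw [p1]
          congr 1
          exact Finset.sum_congr rfl fun k _ => p3 k
      _ = (m:ℝ)^3 * (∑ p : Grid m, (φ p)^2) + (m:ℝ)^3 * ∑ p : Grid m, (lapH h φ p)^2 := by
          rw [p2]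
      _ = (m:ℝ)^3 * A := by rw [hA]; ring
  have h22A : h^3*A ≤ h22sq h φ := by
    have hgrad : 0 ≤ gradsq h φ := by
      rw [gradsq]
      apply mul_nonneg (by positivity)
      apply Finset.sum_nonneg
      intro p _
      positivity
    rw [h22sq, norm2sq, norm2sq, hA]
    nlinarith
  have h22nn : 0 ≤ h22sq h φ := le_trans (by positivity) h22A
  have point : ∀ p : Grid m, |φ p| ≤ Real.sqrt (K/L^3) * Real.sqrt (h22sq h φ) := by
    intro p
    have habs0 : 0 ≤ |φ p| := abs_nonneg _
    have hT0 : 0 ≤ ∑ k : Grid m, ‖DSob.fhat m φ k‖ :=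
      Finset.sum_nonneg fun k _ => norm_nonneg _
    have st1 : (m:ℝ)^3 * |φ p| ≤ ∑ k : Grid m, ‖DSob.fhat m φ k‖ := by
      have inv := DSob.inv_formula m φ p
      have habs : ‖(m:ℂ)^3 * ((φ p : ℝ) : ℂ)‖ = (m:ℝ)^3 * |φ p| := by
        rw [norm_mul, norm_pow, Complex.norm_natCast, Complex.norm_real, Real.norm_eq_abs]
      calc (m:ℝ)^3 * |φ p|
          = ‖∑ k : Grid m, DSob.fhat m φ k * DSob.chi m (DSob.dotg m k p)‖ := by
            rw [inv, habs]
        _ ≤ ∑ k : Grid m, ‖DSob.fhat m φ k * DSob.chi m (DSob.dotg m k p)‖ :=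
            norm_sum_le _ _
        _ = ∑ k : Grid m, ‖DSob.fhat m φ k‖ := by
            refine Finset.sum_congr rfl fun k _ => ?_
            rw [norm_mul, DSob.abs_chi, mul_one]
    have st2 : (∑ k : Grid m, ‖DSob.fhat m φ k‖)^2 ≤ S * ((m:ℝ)^3 * A) := by
      rw [← hsum, hS]
      apply Finset.sum_sq_le_sum_mul_sum_of_sq_eq_mul
      · intro k _
        positivity
      · intro k _
        exact mul_nonneg (by positivity) (Complex.normSq_nonneg _)
      · intro k _
        rw [Complex.sq_norm]
        have hne : (1 + (DSob.lam m h k)^2) ≠ 0 := by positivity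
        field_simp
    have xle : |φ p| ≤ (∑ k : Grid m, ‖DSob.fhat m φ k‖)/(m:ℝ)^3 := by
      rw [le_div_iff₀ hm3]
      linarith
    have e2 : |φ p|^2 ≤ S * A / (m:ℝ)^3 := by
      calc |φ p|^2 ≤ ((∑ k : Grid m, ‖DSob.fhat m φ k‖)/(m:ℝ)^3)^2 :=
            pow_le_pow_left₀ habs0 xle 2
        _ = (∑ k : Grid m, ‖DSob.fhat m φ k‖)^2/((m:ℝ)^3)^2 := by
            rw [div_pow]
        _ ≤ (S * ((m:ℝ)^3 * A))/((m:ℝ)^3)^2 := by gcongr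
        _ = S * A / (m:ℝ)^3 := by field_simp
    have e3 : S * A / (m:ℝ)^3 ≤ K * h22sq h φ / L^3 := by
      have lhs_eq : S * A / (m:ℝ)^3 = S * (h^3*A) / L^3 := by
        rw [← hm3L]
        have hh3 : (h:ℝ)^3 ≠ 0 := by positivity
        field_simp
      rw [lhs_eq]
      gcongr
    have hsq : |φ p|^2 ≤ (K/L^3) * h22sq h φ := by
      calc |φ p|^2 ≤ S * A / (m:ℝ)^3 := e2
        _ ≤ K * h22sq h φ / L^3 := e3
        _ = (K/L^3) * h22sq h φ := by ring
    have : |φ p| ≤ Real.sqrt ((K/L^3) * h22sq h φ) :=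
      (Real.le_sqrt habs0 (by positivity)).2 hsq
    rwa [Real.sqrt_mul (le_of_lt hKL0)] at this
  have hne : Nonempty (Grid m) := ⟨(0,0,0)⟩
  rw [normInf]
  exact ciSup_le point
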